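/- Let r, κ : (0,∞) → ℝ be C² with κ > 0, m, c ∈ ℝ, a(ν) = c(m²+ν²)^{1/2}, and j(ν) = r(ν) − a(ν). Suppose ν : ℝ → (0,∞) is a C² solution of κ(ν)ν̈ + (1/2)κ'(ν)ν̇² = j'(ν) with ν(t) → ν⁺, ν̇(t) → 0 as t → +∞ and ν(t) → ν⁻, ν̇(t) → 0 as t → −∞ (where ν⁻ ≠ ν⁺, and j' extends continuously). Then j(ν⁻) = j(ν⁺). -/
import Mathlib


open Set Filter

/-- The kinetic relation: along any heteroclinic profile of
`κ(ν)ν̈ + ½κ'(ν)ν̇² = j'(ν)` with `j = r − a`, `a(ν) = c√(m²+ν²)`, the effective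
potential takes equal values at the two end states. -/
theorem kinetic_relation_equal_levels
    (r κ : ℝ → ℝ) (m c νminus νplus : ℝ)
    (hr : ContDiffOn ℝ 2 r (Ioi 0))
    (hκ : ContDiffOn ℝ 2 κ (Ioi 0))
    (hκpos : ∀ ν > (0:ℝ), 0 < κ ν)
    (a j : ℝ → ℝ)
    (ha : ∀ ν, a ν = c * Real.sqrt (m^2 + ν^2))
    (hj : ∀ ν, j ν = r ν - a ν)
    (hmν : 0 < νminus) (hpν : 0 < νplus) (hne : νminus ≠ νplus)
    (ν dν ddν : ℝ → ℝ)
    (hνpos : ∀ t, 0 < ν t)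
    (hν' : ∀ t, HasDerivAt ν (dν t) t)
    (hν'' : ∀ t, HasDerivAt dν (ddν t) t)
    (hode : ∀ t, κ (ν t) * ddν t + (1/2) * deriv κ (ν t) * (dν t)^2 = deriv j (ν t))
    (hlimp : Tendsto ν atTop (nhds νplus))
    (hlimp' : Tendsto dν atTop (nhds 0))
    (hlimm : Tendsto ν atBot (nhds νminus))
    (hlimm' : Tendsto dν atBot (nhds 0)) :
    j νminus = j νplus := by
  -- differentiability of a, j, κ on positive reals
  have hadiff : ∀ x : ℝ, 0 < x → DifferentiableAt ℝ a x := by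
    intro x hx
    have hfun : a = fun y => c * Real.sqrt (m ^ 2 + y ^ 2) := funext ha
    rw [hfun]
    have hne0 : m ^ 2 + x ^ 2 ≠ 0 := by positivity
    exact (((Real.hasDerivAt_sqrt hne0).differentiableAt.comp x
      (by fun_prop)).const_mul c)
  have hjdiff : ∀ x : ℝ, 0 < x → DifferentiableAt ℝ j x := by
    intro x hx
    have hfun : j = fun y => r y - a y := funext hj
    rw [hfun]
    have hrd : DifferentiableAt ℝ r x :=
      ((hr.differentiableOn (by norm_num)).differentiableAt
        (isOpen_Ioi.mem_nhds hx))
    exact hrd.sub (hadiff x hx)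
  have hκdiff : ∀ x : ℝ, 0 < x → DifferentiableAt ℝ κ x := fun x hx =>
    (hκ.differentiableOn (by norm_num)).differentiableAt (isOpen_Ioi.mem_nhds hx)
  set F : ℝ → ℝ := fun t => j (ν t) - (1/2) * (κ (ν t) * (dν t) ^ 2) with hF
  have hF' : ∀ t, HasDerivAt F 0 t := by
    intro t
    have h1 : HasDerivAt (fun s => j (ν s)) (deriv j (ν t) * dν t) t :=
      ((hjdiff (ν t) (hνpos t)).hasDerivAt).comp t (hν' t)
    have h2 : HasDerivAt (fun s => κ (ν s)) (deriv κ (ν t) * dν t) t :=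
      ((hκdiff (ν t) (hνpos t)).hasDerivAt).comp t (hν' t)
    have h3 : HasDerivAt (fun s => (dν s) ^ 2) (2 * dν t ^ 1 * ddν t) t :=
      (hν'' t).pow 2
    have h4 := (h1.sub ((h2.mul h3).const_mul (1/2)))
    have key : deriv j (ν t) * dν t -
        (1/2) * (deriv κ (ν t) * dν t * dν t ^ 2 + κ (ν t) * (2 * dν t ^ 1 * ddν t)) = 0 := by
      linear_combination (-(dν t)) * (hode t)
    rw [key] at h4
    exact h4
  have hconst : ∀ t, F t = F 0 := fun t =>
    is_const_of_deriv_eq_zero (fun x => (hF' x).differentiableAt)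
      (fun x => (hF' x).deriv) t 0
  have hFconstTendsto : ∀ (l : Filter ℝ), Tendsto F l (nhds (F 0)) := by
    intro l
    have : F = fun _ => F 0 := funext hconst
    rw [this]; exact tendsto_const_nhds
  have hcontj_p : ContinuousAt j νplus := (hjdiff _ hpν).continuousAt
  have hcontj_m : ContinuousAt j νminus := (hjdiff _ hmν).continuousAt
  have hcontκ_p : ContinuousAt κ νplus := (hκdiff _ hpν).continuousAt
  have hcontκ_m : ContinuousAt κ νminus := (hκdiff _ hmν).continuousAt
  have htop : Tendsto F atTop (nhds (j νplus - (1/2) * (κ νplus * 0 ^ 2))) := by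
    exact ((hcontj_p.tendsto.comp hlimp).sub
      ((((hcontκ_p.tendsto.comp hlimp)).mul (hlimp'.pow 2)).const_mul (1/2)))
  have hbot : Tendsto F atBot (nhds (j νminus - (1/2) * (κ νminus * 0 ^ 2))) := by
    exact ((hcontj_m.tendsto.comp hlimm).sub
      ((((hcontκ_m.tendsto.comp hlimm)).mul (hlimm'.pow 2)).const_mul (1/2)))
  have e1 : j νplus - (1/2) * (κ νplus * 0 ^ 2) = F 0 :=
    tendsto_nhds_unique htop (hFconstTendsto atTop)
  have e2 : j νminus - (1/2) * (κ νminus * 0 ^ 2) = F 0 :=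
    tendsto_nhds_unique hbot (hFconstTendsto atBot)
  have := e1.trans e2.symm
  simpa using this.symm
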